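/- Let $d \ge 1$ and let $(\sigma_n)_{n \ge 1}$ be the non-increasing rearrangement of the family $\left(\prod_{\ell=1}^d (1+|k_{\ell}|)^{-1}\right)_{k \in \mathbb{Z}^d}$. Then for all $n > e^{d/2}$, $\sigma_n \le \frac{1}{n}\left(\frac{2e \ln n}{d}\right)^d$. -/

import Mathlib

open Finset Real

lemma term_bound {p a : ℝ} (hp : 1 < p) (ha : 1 ≤ a) :
    (p - 1) * (a + 1) ^ (-p) ≤ a ^ (1 - p) - (a + 1) ^ (1 - p) := by
  have ha0 : (0:ℝ) < a := by linarith
  have hb0 : (0:ℝ) < a + 1 := by linarith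
  set q := p - 1 with hq
  have hq0 : 0 < q := by simp [hq]; linarith
  have hlog : 1 / (a + 1) ≤ Real.log ((a + 1) / a) := by
    have h := Real.log_le_sub_one_of_pos (x := a / (a+1)) (by positivity)
    have h2 : Real.log ((a+1)/a) = - Real.log (a/(a+1)) := by
      rw [← Real.log_inv]; congr 1; field_simp
    have h3 : a/(a+1) - 1 = -(1/(a+1)) := by field_simp; ring
    linarith
  have hkey : q / (a + 1) ≤ ((a + 1) / a) ^ q - 1 := by
    have h1 : q * Real.log ((a+1)/a) + 1 ≤ Real.exp (q * Real.log ((a+1)/a)) :=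
      Real.add_one_le_exp _
    have h2 : ((a + 1) / a) ^ q = Real.exp (Real.log ((a+1)/a) * q) :=
      Real.rpow_def_of_pos (by positivity) q
    have h3 : q * (1/(a+1)) ≤ q * Real.log ((a+1)/a) :=
      mul_le_mul_of_nonneg_left hlog hq0.le
    rw [h2, mul_comm]
    calc q / (a+1) = q * (1/(a+1)) := by ring
    _ ≤ Real.exp (q * Real.log ((a+1)/a)) - 1 := by linarith
  have hbq : (0:ℝ) < (a+1) ^ (-q) := Real.rpow_pos_of_pos hb0 _
  have e1 : a ^ (1 - p) = (a+1) ^ (-q) * ((a+1)/a) ^ q := by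
    rw [Real.div_rpow hb0.le ha0.le, Real.rpow_neg hb0.le]
    field_simp [hq]
    rw [← Real.rpow_add ha0]; norm_num
    rw [hq, show (1:ℝ) - p + (p - 1) = 0 by ring, Real.rpow_zero]
  have e2 : (a + 1) ^ (1 - p) = (a+1) ^ (-q) := by rw [hq]; ring_nf
  have e3 : (p - 1) * (a+1) ^ (-p) = (a+1) ^ (-q) * (q / (a+1)) := by
    rw [hq, show -p = -(p-1) + (-1) by ring, Real.rpow_add hb0, Real.rpow_neg_one]
    field_simp
  rw [e1, e2, e3]
  have h := mul_le_mul_of_nonneg_left hkey hbq.le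
  rw [mul_sub, mul_one] at h
  linarith

lemma tail_bound {p : ℝ} (hp : 1 < p) (M : ℕ)
    (tb : ∀ a : ℝ, 1 ≤ a → (p - 1) * (a + 1) ^ (-p) ≤ a ^ (1 - p) - (a + 1) ^ (1 - p)) :
    ∑ i ∈ Finset.range M, ((1:ℝ) + (i+1)) ^ (-p) ≤ 1 / (p - 1) := by
  have hp0 : (0:ℝ) < p - 1 := by linarith
  have key : ∀ i ∈ Finset.range M, ((1:ℝ) + (i+1)) ^ (-p) ≤
      (1/(p-1)) * (((i:ℝ)+1) ^ (1-p) - (((i:ℝ)+1)+1) ^ (1-p)) := by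
    intro i _
    have h := tb ((i:ℝ)+1) (by have := Nat.cast_nonneg (α:=ℝ) i; linarith)
    rw [show ((1:ℝ) + ((i:ℝ)+1)) = ((i:ℝ)+1) + 1 by ring]
    rw [div_mul_eq_mul_div, le_div_iff₀ hp0]
    linarith
  calc ∑ i ∈ Finset.range M, ((1:ℝ) + (i+1)) ^ (-p)
      ≤ ∑ i ∈ Finset.range M, (1/(p-1)) * ((((i:ℝ))+1) ^ (1-p) - (((i:ℝ)+1)+1) ^ (1-p)) :=
        Finset.sum_le_sum key
    _ = (1/(p-1)) * ∑ i ∈ Finset.range M, ((((i:ℝ))+1) ^ (1-p) - (((i:ℝ)+1)+1) ^ (1-p)) := by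
        rw [Finset.mul_sum]
    _ = (1/(p-1)) * (((0:ℝ)+1) ^ (1-p) - ((M:ℝ)+1) ^ (1-p)) := by
        congr 1
        have := Finset.sum_range_sub' (f := fun i : ℕ => ((i:ℝ)+1) ^ (1-p)) M
        simpa using this
    _ ≤ 1 / (p-1) := by
        have h1 : ((0:ℝ)+1) ^ (1-p) = 1 := by norm_num
        have h2 : (0:ℝ) ≤ ((M:ℝ)+1) ^ (1-p) := Real.rpow_nonneg (by positivity) _
        rw [h1]
        nlinarith [mul_nonneg (one_div_pos.mpr hp0).le h2]

lemma box1 {p : ℝ} (hp : 1 < p) (M : ℕ)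
    (tail : ∑ i ∈ Finset.range M, ((1:ℝ) + (i+1)) ^ (-p) ≤ 1 / (p - 1)) :
    ∑ m ∈ Finset.Icc (-(M:ℤ)) M, ((1:ℝ) + |(m:ℝ)|) ^ (-p) ≤ (p+1)/(p-1) := by
  have hp0 : (0:ℝ) < p - 1 := by linarith
  set g : ℤ → ℝ := fun m => ((1:ℝ) + |(m:ℝ)|) ^ (-p) with hg
  have hnat : ∑ m ∈ Finset.Icc (1:ℤ) M, g m = ∑ i ∈ Finset.range M, ((1:ℝ) + (i+1)) ^ (-p) := by
    refine Finset.sum_nbij' (fun m => (m - 1).toNat) (fun i => (i:ℤ) + 1) ?_ ?_ ?_ ?_ ?_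
    · intro a ha; simp only [Finset.mem_Icc] at ha; simp only [Finset.mem_range]; omega
    · intro a ha; simp only [Finset.mem_range] at ha; simp only [Finset.mem_Icc]; omega
    · intro a ha; simp only [Finset.mem_Icc] at ha; omega
    · intro a ha; simp only [Finset.mem_range] at ha; omega
    · intro a ha; simp only [Finset.mem_Icc] at ha
      have h0 : (((a-1).toNat : ℤ) : ℝ) = (a:ℝ) - 1 := by
        rw [Int.toNat_of_nonneg (by omega)]; push_cast; ring
      have h1 : |(a:ℝ)| = (a:ℝ) := abs_of_nonneg (by exact_mod_cast (by omega : (0:ℤ) ≤ a))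
      simp only [hg, h1]
      congr 1
      push_cast at h0 ⊢
      rw [h0]; ring
  have hneg : ∑ m ∈ Finset.Icc (-(M:ℤ)) (-1), g m = ∑ m ∈ Finset.Icc (1:ℤ) M, g m := by
    refine Finset.sum_nbij' (fun m => -m) (fun m => -m) ?_ ?_ ?_ ?_ ?_
    · intro a ha; simp only [Finset.mem_Icc] at ha ⊢; omega
    · intro a ha; simp only [Finset.mem_Icc] at ha ⊢; omega
    · intro a _; ring
    · intro a _; ring
    · intro a _; simp only [hg]; push_cast; rw [abs_neg]
  have hsplit : Finset.Icc (-(M:ℤ)) M = Finset.Icc (-(M:ℤ)) (-1) ∪ Finset.Icc (0:ℤ) M := by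
    ext m; simp only [Finset.mem_union, Finset.mem_Icc]; omega
  have hdisj : Disjoint (Finset.Icc (-(M:ℤ)) (-1)) (Finset.Icc (0:ℤ) M) := by
    rw [Finset.disjoint_left]; intro m hm hm'
    simp only [Finset.mem_Icc] at hm hm'; omega
  have hins : Finset.Icc (0:ℤ) M = insert (0:ℤ) (Finset.Icc (1:ℤ) M) := by
    ext m; simp only [Finset.mem_insert, Finset.mem_Icc]; omega
  have h0notin : (0:ℤ) ∉ Finset.Icc (1:ℤ) M := by simp
  have hg0 : g 0 = 1 := by simp [hg, Real.one_rpow]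
  rw [hsplit, Finset.sum_union hdisj, hins, Finset.sum_insert h0notin, hneg, hnat]
  have hone : ((1:ℝ) + |(((0:ℤ)):ℝ)|) ^ (-p) = 1 := by norm_num
  rw [show ((1:ℝ) + |(((0:ℤ)):ℝ)|) ^ (-p) = 1 from hone]
  have : (p+1)/(p-1) = 1 + 2 * (1/(p-1)) := by field_simp; ring
  rw [this]
  linarith

/-- Non-increasing rearrangement `σ` of the family `(∏_ℓ (1+|k_ℓ|)⁻¹)_{k ∈ ℤ^d}`,
realized by a bijection `e : ℕ ≃ ℤ^d` (so the paper's `σ_n` is `σ (n-1)`): for all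
`n > e^{d/2}` one has `σ_n ≤ (1/n) (2e ln n / d)^d`. -/
theorem stmt15 (d : ℕ) (hd : 1 ≤ d) (σ : ℕ → ℝ) (e : ℕ ≃ (Fin d → ℤ))
    (hσ : ∀ n, σ n = ∏ ℓ, ((1 : ℝ) + |(e n) ℓ|)⁻¹) (hanti : Antitone σ) :
    ∀ n : ℕ, 1 ≤ n → Real.exp ((d : ℝ) / 2) < n →
      σ (n - 1) ≤ (1 / n) * (2 * Real.exp 1 * Real.log n / d) ^ d := by
  intro n hn1 hexp
  have hd0 : (0:ℝ) < d := by exact_mod_cast hd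
  have hn0 : (0:ℝ) < n := by exact_mod_cast hn1
  have hL : (d:ℝ)/2 < Real.log n := (Real.lt_log_iff_exp_lt hn0).mpr hexp
  have hL0 : (0:ℝ) < Real.log n := lt_of_le_of_lt (by positivity) hL
  set L := Real.log n with hLdef
  set r := 2 * L / d with hrdef
  have hr1 : 1 < r := by rw [hrdef, lt_div_iff₀ hd0]; linarith
  set p := (r + 1) / (r - 1) with hpdef
  have hrm : (0:ℝ) < r - 1 := by linarith
  have hp1 : 1 < p := by rw [hpdef, lt_div_iff₀ hrm]; linarith
  have hp0 : (0:ℝ) < p := by linarith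
  have hpr : (p + 1) / (p - 1) = r := by
    rw [div_eq_iff (by linarith : p - 1 ≠ 0), hpdef]
    field_simp
    ring
  -- the function F
  set F : (Fin d → ℤ) → ℝ := fun k => ∏ ℓ, ((1:ℝ) + ((|k ℓ| : ℤ) : ℝ)) ^ (-p) with hF
  have habs : ∀ z : ℤ, (0:ℝ) < 1 + ((|z| : ℤ) : ℝ) := by
    intro z
    have : (0:ℝ) ≤ ((|z| : ℤ) : ℝ) := by exact_mod_cast abs_nonneg z
    linarith
  have hσpos : ∀ j, 0 < σ j := by
    intro j; rw [hσ]
    exact Finset.prod_pos fun ℓ _ => inv_pos.mpr (habs _)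
  have hσp : ∀ j, σ j ^ p = F (e j) := by
    intro j
    rw [hσ, ← Real.finset_prod_rpow _ _ (fun ℓ _ => inv_nonneg.mpr (habs _).le) p]
    exact Finset.prod_congr rfl fun ℓ _ => by
      rw [Real.inv_rpow (habs _).le, ← Real.rpow_neg (habs _).le]
  -- the box
  set M := (Finset.range n).sup (fun j => Finset.univ.sup fun ℓ : Fin d => (e j ℓ).natAbs) with hM
  have hbox : ∀ j ∈ Finset.range n, e j ∈ Fintype.piFinset fun _ : Fin d => Finset.Icc (-(M:ℤ)) M := by
    intro j hj
    rw [Fintype.mem_piFinset]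
    intro ℓ
    have h1a : (e j ℓ).natAbs ≤ Finset.univ.sup fun ℓ : Fin d => (e j ℓ).natAbs :=
      Finset.le_sup (f := fun ℓ : Fin d => (e j ℓ).natAbs) (Finset.mem_univ ℓ)
    have h1b : (Finset.univ.sup fun ℓ : Fin d => (e j ℓ).natAbs) ≤ M :=
      Finset.le_sup (f := fun j => Finset.univ.sup fun ℓ : Fin d => (e j ℓ).natAbs) hj
    have h1 : (e j ℓ).natAbs ≤ M := le_trans h1a h1b
    simp only [Finset.mem_Icc]; omega
  -- 1D bound
  have h1d : ∑ m ∈ Finset.Icc (-(M:ℤ)) M, ((1:ℝ) + |(m:ℝ)|) ^ (-p) ≤ (p+1)/(p-1) :=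
    box1 hp1 M (tail_bound hp1 M fun a ha => term_bound hp1 ha)
  -- sum bound
  have hsum : ∑ j ∈ Finset.range n, F (e j) ≤ r ^ d := by
    have h1 : ∑ j ∈ Finset.range n, F (e j)
        = ∑ k ∈ (Finset.range n).image (fun j => e j), F k :=
      (Finset.sum_image fun x _ y _ h => e.injective h).symm
    rw [h1]
    have h2 : ∑ k ∈ (Finset.range n).image (fun j => e j), F k
        ≤ ∑ k ∈ Fintype.piFinset (fun _ : Fin d => Finset.Icc (-(M:ℤ)) M), F k := by
      apply Finset.sum_le_sum_of_subset_of_nonneg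
      · intro k hk
        obtain ⟨j, hj, rfl⟩ := Finset.mem_image.mp hk
        exact hbox j hj
      · intro k _ _
        exact Finset.prod_nonneg fun ℓ _ => Real.rpow_nonneg (habs _).le _
    refine h2.trans ?_
    have h3 : ∑ k ∈ Fintype.piFinset (fun _ : Fin d => Finset.Icc (-(M:ℤ)) M), F k
        = ∏ ℓ : Fin d, ∑ m ∈ Finset.Icc (-(M:ℤ)) M, ((1:ℝ) + ((|m| : ℤ) : ℝ)) ^ (-p) := by
      rw [Finset.prod_univ_sum (fun _ : Fin d => Finset.Icc (-(M:ℤ)) M)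
        (fun _ m => ((1:ℝ) + ((|m| : ℤ) : ℝ)) ^ (-p))]
    rw [h3]
    have h4 : ∀ m : ℤ, ((1:ℝ) + ((|m| : ℤ) : ℝ)) = (1:ℝ) + |(m:ℝ)| := by
      intro m; push_cast; ring
    calc ∏ ℓ : Fin d, ∑ m ∈ Finset.Icc (-(M:ℤ)) M, ((1:ℝ) + ((|m| : ℤ) : ℝ)) ^ (-p)
        ≤ ∏ ℓ : Fin d, r := by
          apply Finset.prod_le_prod
          · intro ℓ _
            exact Finset.sum_nonneg fun m _ => Real.rpow_nonneg (habs _).le _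
          · intro ℓ _
            calc ∑ m ∈ Finset.Icc (-(M:ℤ)) M, ((1:ℝ) + ((|m| : ℤ) : ℝ)) ^ (-p)
                = ∑ m ∈ Finset.Icc (-(M:ℤ)) M, ((1:ℝ) + |(m:ℝ)|) ^ (-p) := by
                  exact Finset.sum_congr rfl fun m _ => by rw [h4]
              _ ≤ (p+1)/(p-1) := h1d
              _ = r := hpr
      _ = r ^ d := by rw [Finset.prod_const, Finset.card_univ, Fintype.card_fin]
  -- antitone step
  have hmain : (n:ℝ) * σ (n-1) ^ p ≤ r ^ d := by
    have h5 : ∀ j ∈ Finset.range n, σ (n-1) ^ p ≤ σ j ^ p := by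
      intro j hj
      have hj' : j ≤ n - 1 := by rw [Finset.mem_range] at hj; omega
      exact Real.rpow_le_rpow (hσpos _).le (hanti hj') hp0.le
    calc (n:ℝ) * σ (n-1) ^ p = ∑ _j ∈ Finset.range n, σ (n-1) ^ p := by
          rw [Finset.sum_const, Finset.card_range, nsmul_eq_mul]
      _ ≤ ∑ j ∈ Finset.range n, σ j ^ p := Finset.sum_le_sum h5
      _ = ∑ j ∈ Finset.range n, F (e j) := Finset.sum_congr rfl fun j _ => hσp j
      _ ≤ r ^ d := hsum
  -- take p-th root
  have hσle : σ (n-1) ≤ (r ^ d / n) ^ p⁻¹ := by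
    have h6 : σ (n-1) ^ p ≤ r ^ d / n := by
      rw [le_div_iff₀ hn0]; linarith [hmain]
    calc σ (n-1) = (σ (n-1) ^ p) ^ p⁻¹ := (Real.rpow_rpow_inv (hσpos _).le (by linarith)).symm
      _ ≤ (r ^ d / n) ^ p⁻¹ :=
          Real.rpow_le_rpow (Real.rpow_nonneg (hσpos _).le _) h6 (by positivity)
  -- estimate the root
  have hr0 : (0:ℝ) < r := by linarith
  have hpinv : p⁻¹ = (r - 1) / (r + 1) := by
    rw [hpdef, ← one_div, one_div_div]
  have h7 : (r ^ d / n) ^ p⁻¹ = (r ^ d) ^ p⁻¹ / (n:ℝ) ^ p⁻¹ :=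
    Real.div_rpow (by positivity) hn0.le _
  have h8 : (r ^ d) ^ p⁻¹ ≤ r ^ d := by
    rw [← Real.rpow_natCast r d, ← Real.rpow_mul hr0.le]
    apply Real.rpow_le_rpow_of_exponent_le hr1.le
    have : p⁻¹ ≤ 1 := by
      rw [hpinv, div_le_one (by linarith)]; linarith
    exact mul_le_of_le_one_right (Nat.cast_nonneg d) this
  have h9 : ((n:ℝ) ^ p⁻¹)⁻¹ ≤ Real.exp d / n := by
    have e1 : ((n:ℝ) ^ p⁻¹)⁻¹ = Real.exp (L * (-p⁻¹)) := by
      rw [← Real.rpow_neg hn0.le, Real.rpow_def_of_pos hn0, hLdef]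
    have e2 : Real.exp d / n = Real.exp ((d:ℝ) - L) := by
      rw [Real.exp_sub, hLdef, Real.exp_log hn0]
    rw [e1, e2]
    apply Real.exp_le_exp.mpr
    -- need L * (-p⁻¹) ≤ d - L, i.e. L * (1 - p⁻¹) ≤ d
    have e3 : 1 - p⁻¹ = 2 / (r + 1) := by
      rw [hpinv]; field_simp; norm_num
    have e4 : L * (2 / r) = d := by
      rw [hrdef]; field_simp
    have e5 : L * (2 / (r + 1)) ≤ L * (2 / r) := by
      apply mul_le_mul_of_nonneg_left _ hL0.le
      apply div_le_div_of_nonneg_left (by norm_num) hr0 (by linarith)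
    nlinarith [e3, e4, e5]
  -- conclude
  have h10 : (2 * Real.exp 1 * L / d) ^ d = Real.exp d * r ^ d := by
    have : 2 * Real.exp 1 * L / d = Real.exp 1 * r := by rw [hrdef]; ring
    rw [this, mul_pow, Real.exp_one_pow]
  calc σ (n-1) ≤ (r ^ d / n) ^ p⁻¹ := hσle
    _ = (r ^ d) ^ p⁻¹ * ((n:ℝ) ^ p⁻¹)⁻¹ := by rw [h7]; ring
    _ ≤ r ^ d * (Real.exp d / n) := by
        apply mul_le_mul h8 h9 (by positivity) (by positivity)
    _ = (1 / n) * (2 * Real.exp 1 * L / d) ^ d := by rw [h10]; ring
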